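/- Let (s_n) be a strictly increasing sequence of positive reals with lim_{n→∞} s_{⌊nt⌋}/s_n = t for all t ∈ [0,1], 1/s_n → 0, and suppose additionally that s_n^(1/n) → 1 as n → ∞. Then s_n^(1/n) - ((n+1)/n^2) Σ_{r ≤ n} s_r^(1/n) → 0 as n → ∞. -/

import Mathlib

open Filter Real

theorem stmt_6
    (s : ℕ → ℝ) (hmono : StrictMono s) (hpos : ∀ n, 0 < s n)
    (hinv : Tendsto (fun n => 1 / s n) atTop (nhds 0))
    (hlim : ∀ t : ℝ, t ∈ Set.Icc (0 : ℝ) 1 →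
      Tendsto (fun n : ℕ => s ⌊(n : ℝ) * t⌋₊ / s n) atTop (nhds t))
    (hroot : Tendsto (fun n : ℕ => s n ^ ((1 : ℝ) / n)) atTop (nhds 1)) :
    Tendsto
      (fun n : ℕ =>
        s n ^ ((1 : ℝ) / n) -
          (((n : ℝ) + 1) / (n : ℝ) ^ 2) * ∑ r ∈ Finset.Icc 1 n, s r ^ ((1 : ℝ) / n))
      atTop (nhds 0) := by
  have h0 : Tendsto (fun n : ℕ => (1:ℝ)/n) atTop (nhds 0) :=
    tendsto_one_div_atTop_nhds_zero_nat
  have h1 : Tendsto (fun n : ℕ => ((n:ℝ)+1)/(n:ℝ)) atTop (nhds 1) := by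
    have h := h0.const_add (1:ℝ)
    rw [add_zero] at h
    refine h.congr' ?_
    filter_upwards [eventually_ge_atTop 1] with n hn
    have hn0 : (n:ℝ) ≠ 0 := Nat.cast_ne_zero.mpr (by omega)
    field_simp
  have hs1 : Tendsto (fun n : ℕ => s 1 ^ ((1:ℝ)/n)) atTop (nhds 1) := by
    have hexp : Tendsto (fun n : ℕ => Real.exp (Real.log (s 1) * ((1:ℝ)/n)))
        atTop (nhds 1) := by
      have := (h0.const_mul (Real.log (s 1)))
      rw [mul_zero] at this
      simpa [Function.comp_def] using (Real.continuous_exp.tendsto 0).comp this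
    refine hexp.congr (fun n => ?_)
    rw [Real.rpow_def_of_pos (hpos 1)]
  have hL : Tendsto (fun n : ℕ => ((n:ℝ)+1)/(n:ℝ) * (s 1 ^ ((1:ℝ)/n)))
      atTop (nhds 1) := by simpa using h1.mul hs1
  have hU : Tendsto (fun n : ℕ => ((n:ℝ)+1)/(n:ℝ) * (s n ^ ((1:ℝ)/n)))
      atTop (nhds 1) := by simpa using h1.mul hroot
  have hA : Tendsto
      (fun n : ℕ => (((n:ℝ)+1)/(n:ℝ)^2) * ∑ r ∈ Finset.Icc 1 n, s r ^ ((1:ℝ)/n))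
      atTop (nhds 1) := by
    refine tendsto_of_tendsto_of_tendsto_of_le_of_le' hL hU ?_ ?_
    · filter_upwards [eventually_ge_atTop 1] with n hn
      have hn0 : (n:ℝ) ≠ 0 := Nat.cast_ne_zero.mpr (by omega)
      have hnn : 0 ≤ ((n:ℝ)+1)/(n:ℝ)^2 := by positivity
      have hsum : (n:ℝ) * (s 1 ^ ((1:ℝ)/n)) ≤ ∑ r ∈ Finset.Icc 1 n, s r ^ ((1:ℝ)/n) := by
        have hcard : (Finset.Icc 1 n).card = n := by simp
        calc (n:ℝ) * (s 1 ^ ((1:ℝ)/n))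
            = ∑ _r ∈ Finset.Icc 1 n, s 1 ^ ((1:ℝ)/n) := by
              rw [Finset.sum_const, hcard, nsmul_eq_mul]
          _ ≤ ∑ r ∈ Finset.Icc 1 n, s r ^ ((1:ℝ)/n) := by
              refine Finset.sum_le_sum fun r hr => ?_
              exact Real.rpow_le_rpow (hpos 1).le
                (hmono.monotone (Finset.mem_Icc.mp hr).1) (by positivity)
      calc ((n:ℝ)+1)/(n:ℝ) * (s 1 ^ ((1:ℝ)/n))
          = (((n:ℝ)+1)/(n:ℝ)^2) * ((n:ℝ) * (s 1 ^ ((1:ℝ)/n))) := by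
            field_simp
        _ ≤ (((n:ℝ)+1)/(n:ℝ)^2) * ∑ r ∈ Finset.Icc 1 n, s r ^ ((1:ℝ)/n) :=
            mul_le_mul_of_nonneg_left hsum hnn
    · filter_upwards [eventually_ge_atTop 1] with n hn
      have hn0 : (n:ℝ) ≠ 0 := Nat.cast_ne_zero.mpr (by omega)
      have hnn : 0 ≤ ((n:ℝ)+1)/(n:ℝ)^2 := by positivity
      have hsum : ∑ r ∈ Finset.Icc 1 n, s r ^ ((1:ℝ)/n) ≤ (n:ℝ) * (s n ^ ((1:ℝ)/n)) := by
        have hcard : (Finset.Icc 1 n).card = n := by simp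
        calc ∑ r ∈ Finset.Icc 1 n, s r ^ ((1:ℝ)/n)
            ≤ ∑ _r ∈ Finset.Icc 1 n, s n ^ ((1:ℝ)/n) := by
              refine Finset.sum_le_sum fun r hr => ?_
              exact Real.rpow_le_rpow (hpos r).le
                (hmono.monotone (Finset.mem_Icc.mp hr).2) (by positivity)
          _ = (n:ℝ) * (s n ^ ((1:ℝ)/n)) := by
              rw [Finset.sum_const, hcard, nsmul_eq_mul]
      calc (((n:ℝ)+1)/(n:ℝ)^2) * ∑ r ∈ Finset.Icc 1 n, s r ^ ((1:ℝ)/n)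
          ≤ (((n:ℝ)+1)/(n:ℝ)^2) * ((n:ℝ) * (s n ^ ((1:ℝ)/n))) :=
            mul_le_mul_of_nonneg_left hsum hnn
        _ = ((n:ℝ)+1)/(n:ℝ) * (s n ^ ((1:ℝ)/n)) := by field_simp
  simpa using hroot.sub hA
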